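/- Let B₁ ⊂ ℝⁿ be the open unit ball, α > n, and p ∈ (2n/(n−α), 0). Let u ∈ C¹(closure B₁) be a positive solution of u(x) = ∫_{B₁} |x−y|^{α−n} u^{p−1}(y) dy. For λ ∈ (−1, 0), write x^λ = (2λ−x₁, x₂, …, x_n), Σ_λ = {x ∈ B₁ : x₁ < λ}, and u_λ(x) = u(x^λ). Then for every x ∈ Σ_λ, u(x) − u_λ(x) ≥ ∫_{Σ_λ} [ |x−y|^{α−n} − |x^λ−y|^{α−n} ] (u^{p−1}(y) − u_λ^{p−1}(y)) dy. -/

import Mathlib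

open MeasureTheory

/-- The reflection of `x` about the hyperplane `{x₁ = l}`. -/
noncomputable def reflPt (n : ℕ) (hn : 0 < n) (l : ℝ) (x : EuclideanSpace ℝ (Fin n)) :
    EuclideanSpace ℝ (Fin n) :=
  x - (2 * (x ⟨0, hn⟩ - l)) • EuclideanSpace.single (⟨0, hn⟩ : Fin n) (1 : ℝ)

namespace ReflAux

variable {n : ℕ} (hn : 0 < n) (l : ℝ)

lemma reflPt_apply (x : EuclideanSpace ℝ (Fin n)) (i : Fin n) :
    reflPt n hn l x i = if i = ⟨0, hn⟩ then 2 * l - x ⟨0, hn⟩ else x i := by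
  simp only [reflPt, PiLp.sub_apply, PiLp.smul_apply, EuclideanSpace.single_apply, smul_eq_mul]
  split <;> rename_i h
  · subst h; ring
  · ring

lemma reflPt_invol (x : EuclideanSpace ℝ (Fin n)) :
    reflPt n hn l (reflPt n hn l x) = x := by
  ext i
  simp only [reflPt_apply]
  split <;> rename_i h
  · subst h; simp
  · rfl

lemma norm_euc (x : EuclideanSpace ℝ (Fin n)) : ‖x‖ = Real.sqrt (∑ i, (x i)^2) := by
  rw [EuclideanSpace.norm_eq]
  congr 1; apply Finset.sum_congr rfl; intro i _; rw [Real.norm_eq_abs, sq_abs]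

lemma norm_le_of_coords {v w : EuclideanSpace ℝ (Fin n)}
    (h0 : (v ⟨0, hn⟩)^2 ≤ (w ⟨0, hn⟩)^2) (h : ∀ i, i ≠ ⟨0, hn⟩ → v i = w i) :
    ‖v‖ ≤ ‖w‖ := by
  rw [norm_euc, norm_euc]
  apply Real.sqrt_le_sqrt
  rw [← Finset.sum_erase_add _ _ (Finset.mem_univ (⟨0, hn⟩ : Fin n)),
      ← Finset.sum_erase_add _ _ (Finset.mem_univ (⟨0, hn⟩ : Fin n))]
  have : ∀ i ∈ Finset.univ.erase (⟨0, hn⟩ : Fin n), (v i)^2 = (w i)^2 := by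
    intro i hi
    rw [h i (Finset.ne_of_mem_erase hi)]
  rw [Finset.sum_congr rfl this]
  linarith

lemma norm_eq_of_coords {v w : EuclideanSpace ℝ (Fin n)}
    (h0 : (v ⟨0, hn⟩)^2 = (w ⟨0, hn⟩)^2) (h : ∀ i, i ≠ ⟨0, hn⟩ → v i = w i) :
    ‖v‖ = ‖w‖ :=
  le_antisymm (norm_le_of_coords hn h0.le h)
    (norm_le_of_coords hn h0.ge (fun i hi => (h i hi).symm))

lemma norm_refl_sub_refl (x y : EuclideanSpace ℝ (Fin n)) :
    ‖reflPt n hn l x - reflPt n hn l y‖ = ‖x - y‖ := by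
  apply norm_eq_of_coords hn
  · simp only [PiLp.sub_apply, reflPt_apply, if_pos rfl, if_true]; ring
  · intro i hi; simp only [PiLp.sub_apply, reflPt_apply, if_neg hi]

lemma norm_sub_refl (x y : EuclideanSpace ℝ (Fin n)) :
    ‖x - reflPt n hn l y‖ = ‖reflPt n hn l x - y‖ := by
  apply norm_eq_of_coords hn
  · simp only [PiLp.sub_apply, reflPt_apply, if_pos rfl, if_true]; ring
  · intro i hi; simp only [PiLp.sub_apply, reflPt_apply, if_neg hi]

lemma norm_refl_sub_le {x y : EuclideanSpace ℝ (Fin n)} (hx : x ⟨0, hn⟩ < l)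
    (hy : l ≤ y ⟨0, hn⟩) : ‖reflPt n hn l x - y‖ ≤ ‖x - y‖ := by
  apply norm_le_of_coords hn
  · simp only [PiLp.sub_apply, reflPt_apply, if_pos rfl, if_true]
    nlinarith [sq_nonneg (x ⟨0, hn⟩ - y ⟨0, hn⟩), sq_nonneg (2*l - x ⟨0, hn⟩ - y ⟨0, hn⟩)]
  · intro i hi; simp only [PiLp.sub_apply, reflPt_apply, if_neg hi]

lemma norm_refl_le (hl : l < 0) {x : EuclideanSpace ℝ (Fin n)} (hx : x ⟨0, hn⟩ < l) :
    ‖reflPt n hn l x‖ ≤ ‖x‖ := by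
  apply norm_le_of_coords hn
  · simp only [reflPt_apply, if_pos rfl, if_true]
    nlinarith
  · intro i hi; simp only [reflPt_apply, if_neg hi]

noncomputable def reflLM : EuclideanSpace ℝ (Fin n) →ₗ[ℝ] EuclideanSpace ℝ (Fin n) :=
  LinearMap.id - (LinearMap.toSpanSingleton ℝ (EuclideanSpace ℝ (Fin n))
    ((2 : ℝ) • EuclideanSpace.single (⟨0, hn⟩ : Fin n) (1 : ℝ))).comp
    (EuclideanSpace.projₗ (⟨0, hn⟩ : Fin n))

lemma reflLM_apply (x : EuclideanSpace ℝ (Fin n)) (i : Fin n) :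
    reflLM hn x i = if i = ⟨0, hn⟩ then - x ⟨0, hn⟩ else x i := by
  simp only [reflLM, PiLp.projₗ, LinearMap.sub_apply, LinearMap.id_apply, LinearMap.comp_apply,
    LinearMap.toSpanSingleton_apply, LinearMap.coe_comp, Function.comp_apply,
    LinearMap.proj_apply, LinearEquiv.coe_coe, WithLp.linearEquiv_apply, WithLp.addEquiv,
    PiLp.sub_apply, PiLp.smul_apply, EuclideanSpace.single_apply, smul_eq_mul]
  split <;> rename_i h
  · subst h; ring
  · ring

lemma reflLM_invol : Function.Involutive (reflLM hn (n := n)) := by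
  intro x; ext i
  simp only [reflLM_apply]
  split <;> rename_i h
  · subst h; simp
  · rfl

noncomputable def reflLI : EuclideanSpace ℝ (Fin n) ≃ₗᵢ[ℝ] EuclideanSpace ℝ (Fin n) where
  toLinearEquiv := LinearEquiv.ofInvolutive (reflLM hn) (reflLM_invol hn)
  norm_map' := by
    intro x
    show ‖reflLM hn x‖ = ‖x‖
    rw [norm_euc, norm_euc]
    congr 1
    apply Finset.sum_congr rfl
    intro i _
    rw [reflLM_apply]
    split <;> rename_i h
    · subst h; ring
    · rfl

lemma reflPt_eq (x : EuclideanSpace ℝ (Fin n)) :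
    reflPt n hn l x = reflLM hn x + (2 * l) • EuclideanSpace.single (⟨0, hn⟩ : Fin n) (1 : ℝ) := by
  ext i
  simp only [reflPt_apply, PiLp.add_apply, PiLp.smul_apply, reflLM_apply,
    EuclideanSpace.single_apply, smul_eq_mul]
  split <;> rename_i h
  · ring
  · simp

lemma measurePreserving_reflPt :
    MeasurePreserving (reflPt n hn l) (volume : Measure (EuclideanSpace ℝ (Fin n))) volume := by
  have h1 := (reflLI hn (n := n)).measurePreserving
  have h2 := measurePreserving_add_right (volume : Measure (EuclideanSpace ℝ (Fin n)))
    ((2 * l) • EuclideanSpace.single (⟨0, hn⟩ : Fin n) (1 : ℝ))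
  have h3 := h2.comp h1
  have hfun : reflPt n hn l = (fun x => x + (2 * l) • EuclideanSpace.single (⟨0, hn⟩ : Fin n) (1 : ℝ)) ∘ reflLI hn := by
    funext x; exact reflPt_eq hn l x
  rw [hfun]; exact h3

lemma measurable_reflPt : Measurable (reflPt n hn l) :=
  (measurePreserving_reflPt hn l).measurable

noncomputable def reflME : EuclideanSpace ℝ (Fin n) ≃ᵐ EuclideanSpace ℝ (Fin n) where
  toEquiv := Function.Involutive.toPerm _ (fun x => reflPt_invol hn l x)
  measurable_toFun := measurable_reflPt hn l
  measurable_invFun := measurable_reflPt hn l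

lemma measurableEmbedding_reflPt :
    MeasurableEmbedding (reflPt n hn l) :=
  (reflME hn l).measurableEmbedding

end ReflAux


set_option maxHeartbeats 1000000 in
/-- Moving-plane comparison inequality for positive solutions of the negative-power
integral equation on the unit ball. -/
theorem stmt_11 (n : ℕ) (hn : 0 < n) (α p l : ℝ) (hα : (n : ℝ) < α)
    (hp1 : 2 * (n : ℝ) / ((n : ℝ) - α) < p) (hp2 : p < 0)
    (hl1 : -1 < l) (hl2 : l < 0)
    (u : EuclideanSpace ℝ (Fin n) → ℝ)
    (hu : ContDiffOn ℝ 1 u (closure (Metric.ball (0 : EuclideanSpace ℝ (Fin n)) 1)))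
    (hupos : ∀ x ∈ closure (Metric.ball (0 : EuclideanSpace ℝ (Fin n)) 1), 0 < u x)
    (heq : ∀ x ∈ closure (Metric.ball (0 : EuclideanSpace ℝ (Fin n)) 1),
      u x = ∫ y in Metric.ball (0 : EuclideanSpace ℝ (Fin n)) 1,
        ‖x - y‖ ^ (α - (n : ℝ)) * u y ^ (p - 1)) :
    ∀ x ∈ {x : EuclideanSpace ℝ (Fin n) | x ∈ Metric.ball (0 : EuclideanSpace ℝ (Fin n)) 1 ∧
        x ⟨0, hn⟩ < l},
      u x - u (reflPt n hn l x) ≥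
        ∫ y in {y : EuclideanSpace ℝ (Fin n) | y ∈ Metric.ball (0 : EuclideanSpace ℝ (Fin n)) 1 ∧
            y ⟨0, hn⟩ < l},
          (‖x - y‖ ^ (α - (n : ℝ)) - ‖reflPt n hn l x - y‖ ^ (α - (n : ℝ))) *
            (u y ^ (p - 1) - u (reflPt n hn l y) ^ (p - 1)) := by
  classical
  intro x hx
  obtain ⟨hxB, hxl⟩ := hx
  -- (no abbrev)
  set i0 : Fin n := ⟨0, hn⟩ with hi0
  set B : Set (EuclideanSpace ℝ (Fin n)) := Metric.ball (0 : EuclideanSpace ℝ (Fin n)) 1 with hB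
  set φ : EuclideanSpace ℝ (Fin n) → EuclideanSpace ℝ (Fin n) := reflPt n hn l with hφ
  set S : Set (EuclideanSpace ℝ (Fin n)) := {y : EuclideanSpace ℝ (Fin n) | y ∈ B ∧ y i0 < l} with hSdef
  set S' : Set (EuclideanSpace ℝ (Fin n)) := φ '' S with hS'def
  have e_nonneg : (0:ℝ) ≤ α - n := by linarith
  have hclos : closure B = Metric.closedBall (0 : EuclideanSpace ℝ (Fin n)) 1 := closure_ball (0 : EuclideanSpace ℝ (Fin n)) one_ne_zero
  have hBsub : B ⊆ closure B := subset_closure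
  -- coordinate map continuity
  have hcoord : Continuous (fun y : EuclideanSpace ℝ (Fin n) => y i0) := (EuclideanSpace.proj i0).continuous
  -- membership facts for reflections
  have hφmem : ∀ y : EuclideanSpace ℝ (Fin n), y ∈ S → φ y ∈ B := by
    intro y hy
    rw [hB, Metric.mem_ball, dist_zero_right] at *
    exact lt_of_le_of_lt (ReflAux.norm_refl_le hn l hl2 hy.2) (by
      have := hy.1; rwa [Metric.mem_ball, dist_zero_right] at this)
  have hφxB : φ x ∈ B := hφmem x ⟨hxB, hxl⟩
  -- integrability of continuous-times-weight functions
  have hInt : ∀ f : EuclideanSpace ℝ (Fin n) → ℝ, Continuous f →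
      IntegrableOn (fun y => f y * u y ^ (p - 1)) B := by
    intro f hf
    have hw : ContinuousOn (fun y : EuclideanSpace ℝ (Fin n) => u y ^ (p - 1)) (closure B) :=
      hu.continuousOn.rpow_const (fun y hy => Or.inl (hupos y hy).ne')
    have h1 : ContinuousOn (fun y => f y * u y ^ (p - 1)) (closure B) :=
      hf.continuousOn.mul hw
    rw [hclos] at h1
    exact (h1.integrableOn_compact (isCompact_closedBall _ _)).mono_set
      Metric.ball_subset_closedBall
  have hKcont : ∀ z : EuclideanSpace ℝ (Fin n), Continuous (fun y : EuclideanSpace ℝ (Fin n) => ‖z - y‖ ^ (α - (n:ℝ))) := by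
    intro z
    exact ((continuous_const.sub continuous_id).norm).rpow_const (fun y => Or.inr e_nonneg)
  -- the main integrand
  set g : EuclideanSpace ℝ (Fin n) → ℝ := fun y =>
    (‖x - y‖ ^ (α - (n:ℝ)) - ‖φ x - y‖ ^ (α - (n:ℝ))) * u y ^ (p - 1) with hg
  have hIntg : IntegrableOn g B := hInt _ ((hKcont x).sub (hKcont (φ x)))
  -- measurable sets
  have hSmeas : MeasurableSet S := by
    have : S = B ∩ {y : EuclideanSpace ℝ (Fin n) | y i0 < l} := rfl
    rw [this]
    exact measurableSet_ball.inter (measurableSet_lt hcoord.measurable measurable_const)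
  have hS'eq : S' = φ ⁻¹' S := by
    ext y
    constructor
    · rintro ⟨z, hz, rfl⟩
      show φ (φ z) ∈ S
      rw [hφ, ReflAux.reflPt_invol hn l z]
      exact hz
    · intro hy
      exact ⟨φ y, hy, ReflAux.reflPt_invol hn l y⟩
  have hS'meas : MeasurableSet S' := by
    rw [hS'eq]
    exact (ReflAux.measurable_reflPt hn l) hSmeas
  have hS'gt : ∀ y ∈ S', l < y i0 := by
    rintro y ⟨z, hz, rfl⟩
    have : φ z i0 = 2 * l - z i0 := by
      rw [hφ, ReflAux.reflPt_apply hn l z i0, if_pos rfl]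
    rw [this]
    linarith [hz.2]
  have hdisj : Disjoint S S' := by
    rw [Set.disjoint_left]
    intro y hy hy'
    exact absurd (hS'gt y hy') (not_lt.mpr (le_of_lt hy.2))
  have hSsub : S ⊆ B := fun y hy => hy.1
  have hS'sub : S' ⊆ B := by rintro y ⟨z, hz, rfl⟩; exact hφmem z hz
  have hSS'B : S ∪ S' ⊆ B := Set.union_subset hSsub hS'sub
  -- step 1 : difference formula
  have hux := heq x (hBsub hxB)
  have huφx := heq (φ x) (hBsub hφxB)
  have h0 : u x - u (φ x) = ∫ y in B, g y := by
    rw [hux, huφx, hg]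
    rw [show (fun y => (‖x - y‖ ^ (α - (n:ℝ)) - ‖φ x - y‖ ^ (α - (n:ℝ))) * u y ^ (p - 1))
        = fun y => ‖x - y‖ ^ (α - (n:ℝ)) * u y ^ (p - 1)
            - ‖φ x - y‖ ^ (α - (n:ℝ)) * u y ^ (p - 1) from funext fun y => by ring]
    rw [integral_sub (hInt _ (hKcont x)) (hInt _ (hKcont (φ x)))]
  -- step 2 : split the domain
  have hBdecomp : B = (S ∪ S') ∪ (B \ (S ∪ S')) := (Set.union_diff_cancel hSS'B).symm
  have hsplit : ∫ y in B, g y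
      = ((∫ y in S, g y) + ∫ y in S', g y) + ∫ y in B \ (S ∪ S'), g y := by
    conv_lhs => rw [hBdecomp]
    rw [setIntegral_union disjoint_sdiff_self_right
        (measurableSet_ball.diff (hSmeas.union hS'meas))
        (hIntg.mono_set hSS'B) (hIntg.mono_set Set.diff_subset),
      setIntegral_union hdisj hS'meas (hIntg.mono_set hSsub) (hIntg.mono_set hS'sub)]
  -- step 3 : remainder is nonnegative
  have hrem : 0 ≤ ∫ y in B \ (S ∪ S'), g y := by
    apply setIntegral_nonneg (measurableSet_ball.diff (hSmeas.union hS'meas))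
    intro y hy
    obtain ⟨hyB, hyn⟩ := hy
    have hyge : l ≤ y i0 := by
      by_contra h
      exact hyn (Or.inl ⟨hyB, not_le.mp h⟩)
    have hker : ‖φ x - y‖ ^ (α - (n:ℝ)) ≤ ‖x - y‖ ^ (α - (n:ℝ)) :=
      Real.rpow_le_rpow (norm_nonneg _) (ReflAux.norm_refl_sub_le hn l hxl hyge) e_nonneg
    have hwy : (0:ℝ) < u y ^ (p - 1) := Real.rpow_pos_of_pos (hupos y (hBsub hyB)) _
    exact mul_nonneg (sub_nonneg.mpr hker) hwy.le
  -- step 4 : reflect the integral over S'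
  have himg : ∫ y in S', g y = ∫ y in S, g (φ y) :=
    (ReflAux.measurePreserving_reflPt hn l).setIntegral_image_emb
      (ReflAux.measurableEmbedding_reflPt hn l) g S
  have hIS : IntegrableOn g S := hIntg.mono_set hSsub

  have hISφ : IntegrableOn (fun y => g (φ y)) S :=
    ((ReflAux.measurePreserving_reflPt hn l).integrableOn_image (f := g) (s := S)
      (ReflAux.measurableEmbedding_reflPt hn l)).mp (hIntg.mono_set hS'sub)
  have hpt : (fun y => g y + g (φ y))
      = fun y => (‖x - y‖ ^ (α - (n:ℝ)) - ‖φ x - y‖ ^ (α - (n:ℝ))) *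
          (u y ^ (p - 1) - u (φ y) ^ (p - 1)) := by
    funext y
    show (‖x - y‖ ^ (α - (n:ℝ)) - ‖φ x - y‖ ^ (α - (n:ℝ))) * u y ^ (p - 1)
        + (‖x - φ y‖ ^ (α - (n:ℝ)) - ‖φ x - φ y‖ ^ (α - (n:ℝ))) * u (φ y) ^ (p - 1) = _
    rw [ReflAux.norm_sub_refl hn l x y, ReflAux.norm_refl_sub_refl hn l x y]
    ring
  have hsum : (∫ y in S, g y) + ∫ y in S', g y
      = ∫ y in S, (‖x - y‖ ^ (α - (n:ℝ)) - ‖φ x - y‖ ^ (α - (n:ℝ))) *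
          (u y ^ (p - 1) - u (φ y) ^ (p - 1)) := by
    rw [himg, ← integral_add hIS hISφ]
    exact congrArg _ hpt
  -- conclusion
  rw [ge_iff_le, h0, hsplit, ← hsum]
  linarith [hrem]
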